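/- Suppose d = 3 and k ∈ (3/2, 2]. Assume u ∈ L²(ℝ³) ∩ Ḣ¹(ℝ³), ρ ∈ L^∞(ℝ³) with ρ ≥ 0, and there are constants C₀ such that ∫ ρ|u|² dx ≤ C₀ and ‖ρ − 1‖_{L^k(ℝ³)} ≤ C₀. Then ‖u‖²_{L²(ℝ³)} ≤ C₀' (1 + ‖u‖_{L²}^{2 − 3/k} ‖∇u‖_{L²}^{3/k}) for a constant C₀' depending only on C₀ and k. Consequently ‖u‖_{L²} is bounded by a constant depending only on C₀, k and ‖∇u‖_{L²}. -/

import Mathlib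

open MeasureTheory ENNReal Filter Set Function
open scoped NNReal

noncomputable section

local notation "E3" => EuclideanSpace ℝ (Fin 3)

lemma oneD_bound {g g' : ℝ → ℝ} (hg : ∀ t, HasDerivAt g (g' t) t)
    (hgi : Integrable g) (hg'i : Integrable g') (s : ℝ) :
    |g s| ≤ ∫ t, |g' t| := by
  have habs : Integrable (fun t => |g' t|) := hg'i.abs
  refine le_of_forall_pos_le_add (fun ε hε => ?_)
  -- find t ≤ s with |g t| < ε
  have hex : ∃ t ≤ s, |g t| < ε := by
    by_contra h
    push_neg at h
    have hle : (∫⁻ t in Iic s, ENNReal.ofReal ε) ≤ ∫⁻ t in Iic s, (‖g t‖₊ : ℝ≥0∞) := by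
      refine setLIntegral_mono' measurableSet_Iic (fun t ht => ?_)
      rw [← enorm_eq_nnnorm, Real.enorm_eq_ofReal_abs]
      exact ENNReal.ofReal_le_ofReal (h t ht)
    have hl : (∫⁻ t in Iic s, ENNReal.ofReal ε) = ⊤ := by
      rw [setLIntegral_const, Real.volume_Iic, ENNReal.mul_top]
      simpa using hε
    have hr : (∫⁻ t in Iic s, (‖g t‖₊ : ℝ≥0∞)) < ⊤ :=
      lt_of_le_of_lt (setLIntegral_le_lintegral _ _) hgi.2
    rw [hl] at hle
    exact hr.ne (top_le_iff.mp hle)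
  obtain ⟨t, hts, hgt⟩ := hex
  have ftc : ∫ x in t..s, g' x = g s - g t :=
    intervalIntegral.integral_eq_sub_of_hasDerivAt (fun x _ => hg x) (hg'i.intervalIntegrable)
  have h1 : |g s| ≤ |g t| + |∫ x in t..s, g' x| := by
    rw [ftc]; have := abs_add_le (g t) (g s - g t); simpa using this.trans_eq' (by ring_nf)
  have h2 : |∫ x in t..s, g' x| ≤ ∫ x in t..s, |g' x| := by
    exact intervalIntegral.abs_integral_le_integral_abs hts
  have h3 : ∫ x in t..s, |g' x| ≤ ∫ x, |g' x| := by
    rw [intervalIntegral.integral_of_le hts]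
    exact setIntegral_le_integral habs (Eventually.of_forall (fun x => abs_nonneg _))
  linarith

lemma line_int_ae (f : (Fin 3 → ℝ) → ℝ) (hfm : Measurable f) (hfi : Integrable f) (i : Fin 3) :
    ∀ᵐ x : Fin 3 → ℝ, (∫⁻ t, (‖f (Function.update x i t)‖₊ : ℝ≥0∞)) < ⊤ := by
  classical
  set e := MeasurableEquiv.piFinSuccAbove (fun _ : Fin 3 => ℝ) i with he
  have mp : MeasurePreserving e volume volume :=
    volume_preserving_piFinSuccAbove (fun _ : Fin 3 => ℝ) i
  have hesymm : ∀ z : ℝ × (Fin 2 → ℝ), e.symm z = i.insertNth z.1 z.2 := fun z => rfl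
  have hupd : ∀ (z : ℝ × (Fin 2 → ℝ)) (t : ℝ), Function.update (e.symm z) i t = e.symm (t, z.2) := by
    intro z t
    rw [hesymm, hesymm]
    exact Fin.update_insertNth (α := fun _ : Fin 3 => ℝ) i z.1 t z.2
  set G : (Fin 2 → ℝ) → ℝ≥0∞ := fun y => ∫⁻ t, (‖f (e.symm (t, y))‖₊ : ℝ≥0∞) with hG
  have hm2 : Measurable fun z : ℝ × (Fin 2 → ℝ) => (‖f (e.symm z)‖₊ : ℝ≥0∞) :=
    (hfm.comp e.symm.measurable).nnnorm.coe_nnreal_ennreal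
  have hGm : Measurable G := Measurable.lintegral_prod_left hm2
  have hGfin : (∫⁻ y, G y) ≠ ⊤ := by
    have h1 : (∫⁻ y, G y) = ∫⁻ z : ℝ × (Fin 2 → ℝ), (‖f (e.symm z)‖₊ : ℝ≥0∞) := by
      rw [MeasureTheory.Measure.volume_eq_prod, lintegral_prod_symm _ hm2.aemeasurable]
    have h2 : (∫⁻ z : ℝ × (Fin 2 → ℝ), (‖f (e.symm z)‖₊ : ℝ≥0∞)) = ∫⁻ x, (‖f x‖₊ : ℝ≥0∞) :=
      (mp.symm e).lintegral_comp hfm.nnnorm.coe_nnreal_ennreal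
    rw [h1, h2]
    exact hfi.2.ne
  have haeG : ∀ᵐ y : Fin 2 → ℝ, G y < ⊤ := ae_lt_top hGm hGfin
  -- lift to the product space
  have haeProd : ∀ᵐ z : ℝ × (Fin 2 → ℝ), G z.2 < ⊤ := by
    rw [MeasureTheory.Measure.volume_eq_prod]
    have hB : MeasurableSet {y : Fin 2 → ℝ | ¬ G y < ⊤} := by
      have : {y : Fin 2 → ℝ | ¬ G y < ⊤} = G ⁻¹' {⊤} := by
        ext y; simp [lt_top_iff_ne_top]
      rw [this]; exact hGm (measurableSet_singleton _)
    have hBnull : volume {y : Fin 2 → ℝ | ¬ G y < ⊤} = 0 := by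
      exact ae_iff.mp haeG
    have hsub : {z : ℝ × (Fin 2 → ℝ) | ¬ G z.2 < ⊤} ⊆ univ ×ˢ {y | ¬ G y < ⊤} := by
      intro z hz; exact ⟨trivial, hz⟩
    refine measure_mono_null hsub ?_
    rw [MeasureTheory.Measure.prod_prod, hBnull, mul_zero]
  -- transfer back
  have hmeasSet : MeasurableSet {x : Fin 3 → ℝ | (∫⁻ t, (‖f (Function.update x i t)‖₊ : ℝ≥0∞)) < ⊤} := by
    have hF : Measurable fun x : Fin 3 → ℝ => ∫⁻ t, (‖f (Function.update x i t)‖₊ : ℝ≥0∞) := by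
      have := (Measurable.lmarginal (fun _ : Fin 3 => volume)
        (hfm.nnnorm.coe_nnreal_ennreal) (s := {i}))
      have heq : (∫⋯∫⁻_{i}, (fun x => (‖f x‖₊ : ℝ≥0∞)) ∂(fun _ : Fin 3 => volume))
          = fun x => ∫⁻ t, (‖f (Function.update x i t)‖₊ : ℝ≥0∞) :=
        lmarginal_singleton _ i
      rwa [heq] at this
    exact measurableSet_lt hF measurable_const
  have hmap : Measure.map e.symm volume = volume := (mp.symm e).map_eq
  rw [← hmap, ae_map_iff e.symm.measurable.aemeasurable hmeasSet]
  refine haeProd.mono (fun z hz => ?_)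
  have : (fun t => (‖f (Function.update (e.symm z) i t)‖₊ : ℝ≥0∞))
      = fun t => (‖f (e.symm (t, z.2))‖₊ : ℝ≥0∞) := by
    funext t; rw [hupd]
  simpa [this] using hz

lemma ae_line_bound (f : (Fin 3 → ℝ) → ℝ) (hf : Differentiable ℝ f) (hfi : Integrable f)
    (i : Fin 3) :
    ∀ᵐ x : Fin 3 → ℝ, (‖f x‖₊ : ℝ≥0∞) ≤ ∫⁻ t, (‖fderiv ℝ f (update x i t)‖₊ : ℝ≥0∞) := by
  filter_upwards [line_int_ae f hf.continuous.measurable hfi i] with x hx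
  by_cases hH : (∫⁻ t, (‖fderiv ℝ f (update x i t)‖₊ : ℝ≥0∞)) = ⊤
  · rw [hH]; exact le_top
  set g : ℝ → ℝ := fun t => f (update x i t) with hgdef
  set g' : ℝ → ℝ := fun t => fderiv ℝ f (update x i t) (Pi.single i 1) with hg'def
  have hupdc : Continuous fun t : ℝ => update x i t := continuous_const.update i continuous_id
  have hg : ∀ t, HasDerivAt g (g' t) t := fun t =>
    (hf (update x i t)).hasFDerivAt.comp_hasDerivAt t (hasDerivAt_update x i t)
  have hgm : AEStronglyMeasurable g volume :=
    (hf.continuous.comp hupdc).aestronglyMeasurable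
  have hgi : Integrable g := by
    refine ⟨hgm, ?_⟩
    simpa [HasFiniteIntegral, enorm_eq_nnnorm] using hx
  have hptle : ∀ t, (‖g' t‖₊ : ℝ≥0∞) ≤ (‖fderiv ℝ f (update x i t)‖₊ : ℝ≥0∞) := by
    intro t
    rw [ENNReal.coe_le_coe, ← NNReal.coe_le_coe]
    calc ‖g' t‖ ≤ ‖fderiv ℝ f (update x i t)‖ * ‖(Pi.single i 1 : Fin 3 → ℝ)‖ :=
          (fderiv ℝ f (update x i t)).le_opNorm _
    _ ≤ ‖fderiv ℝ f (update x i t)‖ * 1 := by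
          gcongr
          rw [Pi.norm_single]
          simp
    _ = ‖fderiv ℝ f (update x i t)‖ := mul_one _
  have hg'm : Measurable g' :=
    (measurable_fderiv_apply_const ℝ f (Pi.single i 1)).comp hupdc.measurable
  have hg'i : Integrable g' := by
    refine ⟨hg'm.aestronglyMeasurable, ?_⟩
    simpa [HasFiniteIntegral, enorm_eq_nnnorm] using lt_of_le_of_lt (lintegral_mono hptle) (lt_top_iff_ne_top.mpr hH)
  have key := oneD_bound hg hgi hg'i (x i)
  have hxx : update x i (x i) = x := Function.update_eq_self i x
  have h0 : |f x| ≤ ∫ t, |g' t| := by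
    have : g (x i) = f x := by rw [hgdef]; simp [hxx]
    rwa [this] at key
  calc (‖f x‖₊ : ℝ≥0∞) = ENNReal.ofReal |f x| := Real.enorm_eq_ofReal_abs _
  _ ≤ ENNReal.ofReal (∫ t, |g' t|) := ENNReal.ofReal_le_ofReal h0
  _ = ∫⁻ t, ENNReal.ofReal |g' t| := by
        rw [ofReal_integral_eq_lintegral_ofReal hg'i.abs
          (Eventually.of_forall (fun t => abs_nonneg _))]
  _ ≤ ∫⁻ t, (‖fderiv ℝ f (update x i t)‖₊ : ℝ≥0∞) := by
        refine lintegral_mono (fun t => ?_)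
        rw [← Real.enorm_eq_ofReal_abs]
        exact hptle t

lemma nash_pi (f : (Fin 3 → ℝ) → ℝ) (hf : Differentiable ℝ f) (hfi : Integrable f) :
    (∫⁻ x, (‖f x‖₊ : ℝ≥0∞) ^ (3/2 : ℝ)) ≤ (∫⁻ x, (‖fderiv ℝ f x‖₊ : ℝ≥0∞)) ^ (3/2 : ℝ) := by
  have hmeas : Measurable fun x : Fin 3 → ℝ => (‖fderiv ℝ f x‖₊ : ℝ≥0∞) :=
    (measurable_fderiv ℝ f).nnnorm.coe_nnreal_ennreal
  have hae : ∀ᵐ x : Fin 3 → ℝ, ∀ i : Fin 3,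
      (‖f x‖₊ : ℝ≥0∞) ≤ ∫⁻ t, (‖fderiv ℝ f (update x i t)‖₊ : ℝ≥0∞) := by
    rw [ae_all_iff]
    exact fun i => ae_line_bound f hf hfi i
  have hp : Real.HolderConjugate (Fintype.card (Fin 3)) (3/2) := by
    constructor
    · norm_num
    · norm_num
    · norm_num
  have key := lintegral_prod_lintegral_pow_le (fun _ : Fin 3 => (volume : Measure ℝ)) hp hmeas
  calc (∫⁻ x, (‖f x‖₊ : ℝ≥0∞) ^ (3/2 : ℝ))
      = ∫⁻ x, ∏ _i : Fin 3, (‖f x‖₊ : ℝ≥0∞) ^ ((1:ℝ)/2) := by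
        refine lintegral_congr (fun x => ?_)
        rw [Finset.prod_const]
        rw [← ENNReal.rpow_natCast ((‖f x‖₊ : ℝ≥0∞) ^ ((1:ℝ)/2)) _, ← ENNReal.rpow_mul]
        norm_num
    _ ≤ ∫⁻ x, ∏ i : Fin 3, (∫⁻ t, (‖fderiv ℝ f (update x i t)‖₊ : ℝ≥0∞)) ^ ((1:ℝ)/2) := by
        refine lintegral_mono_ae (hae.mono (fun x hx => ?_))
        refine Finset.prod_le_prod' (fun i _ => ?_)
        exact ENNReal.rpow_le_rpow (hx i) (by norm_num)
    _ ≤ (∫⁻ x, (‖fderiv ℝ f x‖₊ : ℝ≥0∞)) ^ (3/2 : ℝ) := by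
        rw [MeasureTheory.volume_pi]
        norm_num at key ⊢
        exact key

lemma nash_euc : ∃ c : ℝ≥0, 0 < c ∧ ∀ φ : E3 → ℝ, Differentiable ℝ φ → Integrable φ →
    (∫⁻ x, (‖φ x‖₊ : ℝ≥0∞) ^ (3/2:ℝ))
      ≤ ((c : ℝ≥0∞) * ∫⁻ x, (‖fderiv ℝ φ x‖₊ : ℝ≥0∞)) ^ (3/2:ℝ) := by
  classical
  set CLE := (EuclideanSpace.equiv (Fin 3) ℝ) with hCLE
  set L : (Fin 3 → ℝ) →L[ℝ] E3 := (CLE.symm : (Fin 3 → ℝ) ≃L[ℝ] E3).toContinuousLinearMap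
  refine ⟨‖L‖₊ + 1, add_pos_of_nonneg_of_pos (by positivity) one_pos, fun φ hφ hint => ?_⟩
  set e := (MeasurableEquiv.toLp 2 (Fin 3 → ℝ)).symm with he
  have vp : MeasurePreserving e volume volume :=
    EuclideanSpace.volume_preserving_symm_measurableEquiv_toLp (Fin 3)
  have vps : MeasurePreserving e.symm volume volume := vp.symm e
  have hcoe : (⇑e.symm : (Fin 3 → ℝ) → E3) = ⇑L := rfl
  set f : (Fin 3 → ℝ) → ℝ := fun y => φ (L y) with hf
  have hfd : Differentiable ℝ f := hφ.comp L.differentiable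
  have hfint : Integrable f := by
    have := (vps.integrable_comp hint.1).mpr hint
    simpa [hcoe, Function.comp_def] using this
  have hfd_eq : ∀ y, fderiv ℝ f y = (fderiv ℝ φ (L y)).comp L := by
    intro y
    exact (((hφ (L y)).hasFDerivAt).comp y L.hasFDerivAt).fderiv
  have hmφ : Measurable fun x : E3 => (‖φ x‖₊ : ℝ≥0∞) ^ (3/2:ℝ) :=
    (hφ.continuous.measurable.nnnorm.coe_nnreal_ennreal).pow_const _
  have step1 : (∫⁻ x, (‖φ x‖₊ : ℝ≥0∞) ^ (3/2:ℝ)) = ∫⁻ y, (‖f y‖₊ : ℝ≥0∞) ^ (3/2:ℝ) := by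
    rw [← vps.lintegral_comp hmφ]
    simp [hcoe, hf]
  have step3 : (∫⁻ y, (‖fderiv ℝ f y‖₊ : ℝ≥0∞))
      ≤ (‖L‖₊ : ℝ≥0∞) * ∫⁻ x, (‖fderiv ℝ φ x‖₊ : ℝ≥0∞) := by
    have hb : ∀ y, (‖fderiv ℝ f y‖₊ : ℝ≥0∞) ≤ (‖fderiv ℝ φ (L y)‖₊ : ℝ≥0∞) * ‖L‖₊ := by
      intro y
      rw [hfd_eq y]
      exact_mod_cast ENNReal.coe_le_coe.mpr ((fderiv ℝ φ (L y)).opNNNorm_comp_le L)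
    calc (∫⁻ y, (‖fderiv ℝ f y‖₊ : ℝ≥0∞))
        ≤ ∫⁻ y, (‖fderiv ℝ φ (L y)‖₊ : ℝ≥0∞) * ‖L‖₊ := lintegral_mono hb
      _ = (∫⁻ y, (‖fderiv ℝ φ (L y)‖₊ : ℝ≥0∞)) * ‖L‖₊ := lintegral_mul_const' _ _ (by simp)
      _ = (∫⁻ x, (‖fderiv ℝ φ x‖₊ : ℝ≥0∞)) * ‖L‖₊ := by
          congr 1
          have hm : Measurable fun x : E3 => (‖fderiv ℝ φ x‖₊ : ℝ≥0∞) :=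
            (measurable_fderiv ℝ φ).nnnorm.coe_nnreal_ennreal
          have := vps.lintegral_comp hm
          simpa [hcoe] using this
      _ = (‖L‖₊ : ℝ≥0∞) * ∫⁻ x, (‖fderiv ℝ φ x‖₊ : ℝ≥0∞) := mul_comm _ _
  calc (∫⁻ x, (‖φ x‖₊ : ℝ≥0∞) ^ (3/2:ℝ))
      = ∫⁻ y, (‖f y‖₊ : ℝ≥0∞) ^ (3/2:ℝ) := step1
    _ ≤ (∫⁻ y, (‖fderiv ℝ f y‖₊ : ℝ≥0∞)) ^ (3/2:ℝ) := nash_pi f hfd hfint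
    _ ≤ ((‖L‖₊ : ℝ≥0∞) * ∫⁻ x, (‖fderiv ℝ φ x‖₊ : ℝ≥0∞)) ^ (3/2:ℝ) :=
        ENNReal.rpow_le_rpow step3 (by norm_num)
    _ ≤ (((‖L‖₊ + 1 : ℝ≥0) : ℝ≥0∞) * ∫⁻ x, (‖fderiv ℝ φ x‖₊ : ℝ≥0∞)) ^ (3/2:ℝ) := by
        gcongr
        exact_mod_cast le_self_add

lemma nash_vec : ∃ c : ℝ≥0, 0 < c ∧ ∀ u : E3 → E3, Differentiable ℝ u → MemLp u 2 volume →
    (∫⁻ x, (‖u x‖₊ : ℝ≥0∞) ^ (3:ℝ))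
      ≤ ((c : ℝ≥0∞) * ∫⁻ x, (‖u x‖₊ : ℝ≥0∞) * (‖fderiv ℝ u x‖₊ : ℝ≥0∞)) ^ (3/2:ℝ) := by
  obtain ⟨c₀, hc₀, hnash⟩ := nash_euc
  refine ⟨2 * c₀, by positivity, fun u hu hu2 => ?_⟩
  set φ : E3 → ℝ := fun x => ‖u x‖ ^ 2 with hφdef
  have hD : ∀ x, HasFDerivAt φ (2 • (innerSL ℝ (u x)).comp (fderiv ℝ u x)) x :=
    fun x => (hu x).hasFDerivAt.norm_sq
  have hφd : Differentiable ℝ φ := fun x => (hD x).differentiableAt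
  have hφint : Integrable φ := by
    have h := hu2.integrable_norm_rpow two_ne_zero ENNReal.ofNat_ne_top
    have : (fun x => ‖u x‖ ^ (2 : ℝ≥0∞).toReal) = φ := by
      funext x
      rw [ENNReal.toReal_ofNat, Real.rpow_two]
    rwa [this] at h
  have hbound : ∀ x, (‖fderiv ℝ φ x‖₊ : ℝ≥0∞)
      ≤ 2 * ((‖u x‖₊ : ℝ≥0∞) * (‖fderiv ℝ u x‖₊ : ℝ≥0∞)) := by
    intro x
    rw [(hD x).fderiv]
    calc (‖(2 • (innerSL ℝ (u x)).comp (fderiv ℝ u x) : E3 →L[ℝ] ℝ)‖₊ : ℝ≥0∞)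
        ≤ 2 * (‖(innerSL ℝ (u x)).comp (fderiv ℝ u x)‖₊ : ℝ≥0∞) := by
          have h2 : ‖(2 • (innerSL ℝ (u x)).comp (fderiv ℝ u x) : E3 →L[ℝ] ℝ)‖
              ≤ 2 * ‖(innerSL ℝ (u x)).comp (fderiv ℝ u x)‖ := by
            rw [two_smul, two_mul]
            exact norm_add_le _ _
          have h2' : ‖(2 • (innerSL ℝ (u x)).comp (fderiv ℝ u x) : E3 →L[ℝ] ℝ)‖₊
              ≤ 2 * ‖(innerSL ℝ (u x)).comp (fderiv ℝ u x)‖₊ := by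
            rw [← NNReal.coe_le_coe]
            push_cast
            exact h2
          exact_mod_cast ENNReal.coe_le_coe.mpr h2'
      _ ≤ 2 * ((‖innerSL ℝ (u x)‖₊ : ℝ≥0∞) * (‖fderiv ℝ u x‖₊ : ℝ≥0∞)) := by
          gcongr
          exact_mod_cast ENNReal.coe_le_coe.mpr ((innerSL ℝ (u x)).opNNNorm_comp_le _)
      _ ≤ 2 * ((‖u x‖₊ : ℝ≥0∞) * (‖fderiv ℝ u x‖₊ : ℝ≥0∞)) := by
          gcongr
          have : ‖innerSL ℝ (u x)‖ ≤ ‖u x‖ := (innerSL ℝ (u x)).opNorm_le_bound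
            (norm_nonneg _) (fun v => by
              simpa using abs_real_inner_le_norm (u x) v)
          exact_mod_cast ENNReal.coe_le_coe.mpr this
  have hφnorm : ∀ x, ((‖φ x‖₊ : ℝ≥0∞)) ^ (3/2:ℝ) = (‖u x‖₊ : ℝ≥0∞) ^ (3:ℝ) := by
    intro x
    have h1 : ‖φ x‖₊ = ‖u x‖₊ ^ 2 := by
      rw [hφdef]
      simp [nnnorm_pow, nnnorm_norm]
    rw [h1]
    push_cast
    rw [← ENNReal.rpow_natCast ((‖u x‖₊ : ℝ≥0∞)) 2, ← ENNReal.rpow_mul]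
    norm_num
  calc (∫⁻ x, (‖u x‖₊ : ℝ≥0∞) ^ (3:ℝ))
      = ∫⁻ x, (‖φ x‖₊ : ℝ≥0∞) ^ (3/2:ℝ) := by
        exact (lintegral_congr (fun x => hφnorm x)).symm
    _ ≤ ((c₀ : ℝ≥0∞) * ∫⁻ x, (‖fderiv ℝ φ x‖₊ : ℝ≥0∞)) ^ (3/2:ℝ) := hnash φ hφd hφint
    _ ≤ (((2 * c₀ : ℝ≥0) : ℝ≥0∞) * ∫⁻ x, (‖u x‖₊ : ℝ≥0∞) * (‖fderiv ℝ u x‖₊ : ℝ≥0∞)) ^ (3/2:ℝ) := by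
        apply ENNReal.rpow_le_rpow _ (by norm_num)
        calc (c₀ : ℝ≥0∞) * ∫⁻ x, (‖fderiv ℝ φ x‖₊ : ℝ≥0∞)
            ≤ (c₀ : ℝ≥0∞) * ∫⁻ x, 2 * ((‖u x‖₊ : ℝ≥0∞) * (‖fderiv ℝ u x‖₊ : ℝ≥0∞)) := by
              exact mul_le_mul_right (lintegral_mono hbound) _
          _ = (((2 * c₀ : ℝ≥0) : ℝ≥0∞)) * ∫⁻ x, (‖u x‖₊ : ℝ≥0∞) * (‖fderiv ℝ u x‖₊ : ℝ≥0∞) := by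
              rw [lintegral_const_mul' _ _ (by simp)]
              push_cast
              ring

lemma key_bound (k C₀ : ℝ) (hk : 3/2 < k ∧ k ≤ 2) (hC₀ : 0 < C₀) :
    ∃ K : ℝ, 0 < K ∧
      ∀ (u : E3 → E3) (ρ : E3 → ℝ),
        MemLp u 2 → Differentiable ℝ u → MemLp (fun x => ‖fderiv ℝ u x‖) 2 →
        MemLp ρ ∞ → (∀ x, 0 ≤ ρ x) →
        (∫ x, ρ x * ‖u x‖^2) ≤ C₀ →
        eLpNorm (fun x => ρ x - 1) (ENNReal.ofReal k) volume ≤ ENNReal.ofReal C₀ →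
        ((eLpNorm u 2 volume).toReal) ^ 2
          ≤ 2*C₀ + K * (eLpNorm u 2 volume).toReal
              * (eLpNorm (fun x => ‖fderiv ℝ u x‖) 2 volume).toReal := by
  classical
  obtain ⟨c, hc, hnash⟩ := nash_vec
  have hk0 : (0:ℝ) < k := lt_trans (by norm_num) hk.1
  set V : ℝ≥0∞ := (2:ℝ≥0∞)^k * (ENNReal.ofReal C₀)^k with hV
  have hVne : V ≠ ⊤ := by
    rw [hV]
    exact ENNReal.mul_ne_top (by simp [ENNReal.rpow_eq_top_iff, hk0, hk0.not_gt])
      (by simp [ENNReal.rpow_eq_top_iff, hk0, hk0.not_gt])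
  set K : ℝ := 2 * (V^((1:ℝ)/3)).toReal * (c:ℝ) + 1 with hK
  have hKpos : 0 < K := by positivity
  refine ⟨K, hKpos, fun u ρ hu2 hud hDu2 hρ hρ0 hen hLk => ?_⟩
  have hum : Measurable fun x : E3 => (‖u x‖₊ : ℝ≥0∞) :=
    hud.continuous.measurable.nnnorm.coe_nnreal_ennreal
  have hDm : Measurable fun x : E3 => (‖fderiv ℝ u x‖₊ : ℝ≥0∞) :=
    (measurable_fderiv ℝ u).nnnorm.coe_nnreal_ennreal
  have heLu : eLpNorm u 2 volume = (∫⁻ x, (‖u x‖₊ : ℝ≥0∞) ^ (2:ℝ)) ^ ((1:ℝ)/2) := by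
    rw [eLpNorm_eq_lintegral_rpow_enorm_toReal two_ne_zero ENNReal.ofNat_ne_top]
    simp only [enorm_eq_nnnorm]
    norm_num
  have heLD : eLpNorm (fun x => ‖fderiv ℝ u x‖) 2 volume
      = (∫⁻ x, (‖fderiv ℝ u x‖₊ : ℝ≥0∞) ^ (2:ℝ)) ^ ((1:ℝ)/2) := by
    rw [eLpNorm_eq_lintegral_rpow_enorm_toReal two_ne_zero ENNReal.ofNat_ne_top]
    simp only [enorm_eq_nnnorm, nnnorm_norm]
    norm_num
  set X := (eLpNorm u 2 volume).toReal with hXdef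
  set D := (eLpNorm (fun x => ‖fderiv ℝ u x‖) 2 volume).toReal with hDdef
  set I := ∫⁻ x, (‖u x‖₊ : ℝ≥0∞) ^ (2:ℝ) with hI
  set J := ∫⁻ x, (‖fderiv ℝ u x‖₊ : ℝ≥0∞) ^ (2:ℝ) with hJ
  have hIne : I ≠ ⊤ := by
    intro h
    have h2 := hu2.eLpNorm_lt_top
    rw [heLu, h, ENNReal.top_rpow_of_pos (by norm_num)] at h2
    exact (lt_irrefl _ h2).elim
  have hJne : J ≠ ⊤ := by
    intro h
    have h2 := hDu2.eLpNorm_lt_top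
    rw [heLD, h, ENNReal.top_rpow_of_pos (by norm_num)] at h2
    exact (lt_irrefl _ h2).elim
  have hXeq : ENNReal.ofReal X = I ^ ((1:ℝ)/2) := by
    rw [hXdef, heLu, ENNReal.ofReal_toReal (ENNReal.rpow_ne_top_of_nonneg (by norm_num) hIne)]
  have hDeq : ENNReal.ofReal D = J ^ ((1:ℝ)/2) := by
    rw [hDdef, heLD, ENNReal.ofReal_toReal (ENNReal.rpow_ne_top_of_nonneg (by norm_num) hJne)]
  have hX2 : X^2 = I.toReal := by
    rw [hXdef, heLu, ← ENNReal.toReal_rpow, ← Real.rpow_natCast (I.toReal ^ ((1:ℝ)/2)) 2,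
      ← Real.rpow_mul ENNReal.toReal_nonneg]
    norm_num
  -- measurable version of ρ
  have hρm : AEMeasurable ρ volume := hρ.1.aemeasurable
  set ρ' := hρm.mk ρ with hρ'def
  have hρ'meas : Measurable ρ' := hρm.measurable_mk
  have hρρ' : ρ =ᵐ[volume] ρ' := hρm.ae_eq_mk
  set A : Set E3 := {x | ρ' x ≤ 1/2} with hA
  have hAmeas : MeasurableSet A := measurableSet_le hρ'meas measurable_const
  -- Chebyshev bound on μ A
  have hmuA : volume A ≤ V := by
    have hsub : A ⊆ {x | ((1/2 : ℝ≥0) : ℝ≥0∞) ≤ (‖ρ' x - 1‖₊ : ℝ≥0∞)} := by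
      intro x hx
      have hx2 : ρ' x ≤ 1/2 := hx
      simp only [mem_setOf_eq]
      rw [ENNReal.coe_le_coe, ← NNReal.coe_le_coe]
      push_cast
      rw [Real.norm_eq_abs]
      rw [abs_sub_comm]
      rw [le_abs]
      left
      linarith [hx2]
    have hcheb := meas_ge_le_mul_pow_eLpNorm_enorm (volume : Measure E3)
      (p := ENNReal.ofReal k) (by simp [hk0]) (by simp)
      ((hρ'meas.sub measurable_const).aestronglyMeasurable :
        AEStronglyMeasurable (fun x => ρ' x - 1) volume)
      (ε := ((1/2 : ℝ≥0) : ℝ≥0∞)) (by simp) (by simp)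
    have hcongr : eLpNorm (fun x => ρ' x - 1) (ENNReal.ofReal k) volume
        = eLpNorm (fun x => ρ x - 1) (ENNReal.ofReal k) volume := by
      refine eLpNorm_congr_ae ?_
      filter_upwards [hρρ'] with x hx
      rw [hx]
    calc volume A ≤ volume {x | ((1/2 : ℝ≥0) : ℝ≥0∞) ≤ (‖ρ' x - 1‖₊ : ℝ≥0∞)} :=
          measure_mono hsub
      _ ≤ (((1/2 : ℝ≥0) : ℝ≥0∞))⁻¹ ^ (ENNReal.ofReal k).toReal
          * eLpNorm (fun x => ρ' x - 1) (ENNReal.ofReal k) volume ^ (ENNReal.ofReal k).toReal :=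
          hcheb
      _ ≤ V := by
          rw [ENNReal.toReal_ofReal hk0.le, hcongr]
          have h1 : (((1/2 : ℝ≥0) : ℝ≥0∞))⁻¹ = (2 : ℝ≥0∞) := by
            rw [← ENNReal.coe_inv (by norm_num)]
            norm_num
          rw [h1, hV]
          exact mul_le_mul_right (ENNReal.rpow_le_rpow hLk hk0.le) _
  -- integrability of ρ * ‖u‖²
  have husq : Integrable (fun x => ‖u x‖^2) := by
    have h := hu2.integrable_norm_rpow two_ne_zero ENNReal.ofNat_ne_top
    have heq : (fun x : E3 => ‖u x‖ ^ (2 : ℝ≥0∞).toReal) = fun x => ‖u x‖^2 := by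
      funext x
      rw [ENNReal.toReal_ofNat, Real.rpow_two]
    rwa [heq] at h
  have hrhoInt : Integrable (fun x => ρ x * ‖u x‖^2) := by
    have hS : eLpNormEssSup ρ volume ≠ ⊤ := by
      have := hρ.eLpNorm_lt_top
      rwa [eLpNorm_exponent_top, lt_top_iff_ne_top] at this
    refine husq.bdd_mul (c := (eLpNormEssSup ρ volume).toReal) hρ.1 ?_
    filter_upwards [ae_le_eLpNormEssSup (f := ρ) (μ := volume)] with x hx
    have : ((‖ρ x‖₊ : ℝ≥0∞)).toReal ≤ (eLpNormEssSup ρ volume).toReal :=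
      ENNReal.toReal_mono hS hx
    simpa using this
  have henL : (∫⁻ x, ENNReal.ofReal (ρ x * ‖u x‖^2)) ≤ ENNReal.ofReal C₀ := by
    rw [← ofReal_integral_eq_lintegral_ofReal hrhoInt
      (Eventually.of_forall (fun x => mul_nonneg (hρ0 x) (sq_nonneg _)))]
    exact ENNReal.ofReal_le_ofReal hen
  -- pointwise bound
  set TL := ∫⁻ x in A, (‖u x‖₊ : ℝ≥0∞) ^ (2:ℝ) with hTLdef
  have hptwise : ∀ᵐ x, (‖u x‖₊:ℝ≥0∞)^(2:ℝ) ≤ ENNReal.ofReal (ρ x * ‖u x‖^2)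
      + (1/2) * (‖u x‖₊:ℝ≥0∞)^(2:ℝ)
      + A.indicator (fun y => (‖u y‖₊:ℝ≥0∞)^(2:ℝ)) x := by
    filter_upwards [hρρ'] with x hx
    set a := (‖u x‖₊:ℝ≥0∞)^(2:ℝ) with ha
    have haofReal : ENNReal.ofReal (‖u x‖^2) = a := by
      rw [ha, ENNReal.ofReal_pow (norm_nonneg _), ofReal_norm_eq_enorm, enorm_eq_nnnorm,
        ← ENNReal.rpow_natCast]
      norm_num
    by_cases hcase : x ∈ A
    · have hind : A.indicator (fun y => (‖u y‖₊:ℝ≥0∞)^(2:ℝ)) x = a := indicator_of_mem hcase _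
      rw [hind]
      exact le_add_self
    · have hind : A.indicator (fun y => (‖u y‖₊:ℝ≥0∞)^(2:ℝ)) x = 0 :=
        indicator_of_notMem hcase _
      rw [hind, add_zero]
      have hρhalf : (1/2:ℝ) ≤ ρ x := by
        rw [hx]
        simp only [hA, mem_setOf_eq, not_le] at hcase
        linarith
      have h1 : ENNReal.ofReal (ρ x * ‖u x‖^2) = ENNReal.ofReal (ρ x) * a := by
        rw [ENNReal.ofReal_mul (hρ0 x), haofReal]
      have h2 : (1/2:ℝ≥0∞) * a ≤ ENNReal.ofReal (ρ x) * a := by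
        refine mul_le_mul_left ?_ a
        calc (1/2:ℝ≥0∞) = ENNReal.ofReal (1/2) := by
              rw [ENNReal.ofReal_div_of_pos (by norm_num)]
              norm_num
        _ ≤ ENNReal.ofReal (ρ x) := ENNReal.ofReal_le_ofReal hρhalf
      calc a = (1/2:ℝ≥0∞) * a + (1/2:ℝ≥0∞) * a := by
            rw [← add_mul, one_div, ENNReal.inv_two_add_inv_two, one_mul]
        _ ≤ ENNReal.ofReal (ρ x * ‖u x‖^2) + (1/2:ℝ≥0∞) * a := by
            rw [h1]
            exact add_le_add_left h2 _
  -- split I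
  have hIsplit : I ≤ ENNReal.ofReal C₀ + (1/2) * I + TL := by
    have hm1 : AEMeasurable (fun x => ENNReal.ofReal (ρ x * ‖u x‖^2)) volume := by
      exact (hρm.mul (husq.1.aemeasurable.congr (by rfl))).ennreal_ofReal
    have hm2 : Measurable fun x : E3 => (1/2:ℝ≥0∞) * (‖u x‖₊:ℝ≥0∞)^(2:ℝ) :=
      (hum.pow_const _).const_mul _
    have hm3 : Measurable (A.indicator (fun y => (‖u y‖₊:ℝ≥0∞)^(2:ℝ))) :=
      (hum.pow_const _).indicator hAmeas
    calc I ≤ ∫⁻ x, (ENNReal.ofReal (ρ x * ‖u x‖^2)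
          + (1/2) * (‖u x‖₊:ℝ≥0∞)^(2:ℝ)
          + A.indicator (fun y => (‖u y‖₊:ℝ≥0∞)^(2:ℝ)) x) := lintegral_mono_ae hptwise
      _ = (∫⁻ x, ENNReal.ofReal (ρ x * ‖u x‖^2))
          + (∫⁻ x, (1/2:ℝ≥0∞) * (‖u x‖₊:ℝ≥0∞)^(2:ℝ))
          + ∫⁻ x, A.indicator (fun y => (‖u y‖₊:ℝ≥0∞)^(2:ℝ)) x := by
          rw [lintegral_add_right' _ hm3.aemeasurable, lintegral_add_left' hm1]
      _ ≤ ENNReal.ofReal C₀ + (1/2) * I + TL := by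
          refine add_le_add (add_le_add henL ?_) ?_
          · rw [lintegral_const_mul' _ _ (by norm_num), hI]
          · rw [lintegral_indicator hAmeas, hTLdef]
  have hhalfI_ne : (1/2:ℝ≥0∞) * I ≠ ⊤ := ENNReal.mul_ne_top (by norm_num) hIne
  have hIle : I ≤ 2 * ENNReal.ofReal C₀ + 2 * TL := by
    have hsum : (1/2:ℝ≥0∞) * I + (1/2:ℝ≥0∞) * I
        ≤ (ENNReal.ofReal C₀ + TL) + (1/2:ℝ≥0∞) * I := by
      calc (1/2:ℝ≥0∞) * I + (1/2:ℝ≥0∞) * I = I := by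
            rw [← add_mul, one_div, ENNReal.inv_two_add_inv_two, one_mul]
        _ ≤ ENNReal.ofReal C₀ + (1/2) * I + TL := hIsplit
        _ = (ENNReal.ofReal C₀ + TL) + (1/2:ℝ≥0∞) * I := by ring
    have hhalf : (1/2:ℝ≥0∞) * I ≤ ENNReal.ofReal C₀ + TL :=
      ENNReal.le_of_add_le_add_right hhalfI_ne hsum
    calc I = 2 * ((1/2:ℝ≥0∞) * I) := by
          rw [← mul_assoc, show (2:ℝ≥0∞) * (1/2) = 1 by
            rw [one_div, ENNReal.mul_inv_cancel two_ne_zero ENNReal.ofNat_ne_top], one_mul]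
      _ ≤ 2 * (ENNReal.ofReal C₀ + TL) := mul_le_mul_right hhalf _
      _ = 2 * ENNReal.ofReal C₀ + 2 * TL := by ring
  -- Hölder chain for TL
  have hTLbound : TL ≤ V^((1:ℝ)/3) * ((c:ℝ≥0∞) * (I^((1:ℝ)/2)) * (J^((1:ℝ)/2))) := by
    have hconj : Real.HolderConjugate 3 (3/2) := ⟨by norm_num, by norm_num, by norm_num⟩
    have hholder := ENNReal.lintegral_mul_le_Lp_mul_Lq (volume : Measure E3) hconj
      ((measurable_one.indicator hAmeas (s := A)).aemeasurable :
        AEMeasurable (A.indicator (1 : E3 → ℝ≥0∞)) volume)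
      ((hum.pow_const (2:ℝ)).aemeasurable)
    have hlhs : TL = ∫⁻ x, (A.indicator (1 : E3 → ℝ≥0∞) * fun x => (‖u x‖₊:ℝ≥0∞)^(2:ℝ)) x := by
      rw [hTLdef, ← lintegral_indicator hAmeas]
      refine lintegral_congr (fun x => ?_)
      by_cases hx : x ∈ A
      · simp [indicator_of_mem hx]
      · simp [indicator_of_notMem hx]
    have hr1 : (∫⁻ x, (A.indicator (1 : E3 → ℝ≥0∞) x) ^ (3:ℝ)) = volume A := by
      rw [← lintegral_indicator_one hAmeas]
      refine lintegral_congr (fun x => ?_)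
      by_cases hx : x ∈ A
      · simp [indicator_of_mem hx]
      · simp [indicator_of_notMem hx, ENNReal.zero_rpow_of_pos]
    have hr2 : (∫⁻ x, ((‖u x‖₊:ℝ≥0∞)^(2:ℝ)) ^ (3/2:ℝ)) = ∫⁻ x, (‖u x‖₊:ℝ≥0∞)^(3:ℝ) := by
      refine lintegral_congr (fun x => ?_)
      rw [← ENNReal.rpow_mul]
      norm_num
    have hnash_u := hnash u hud hu2
    have hhold2 : (∫⁻ x, (‖u x‖₊:ℝ≥0∞) * (‖fderiv ℝ u x‖₊:ℝ≥0∞))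
        ≤ (I^((1:ℝ)/2)) * (J^((1:ℝ)/2)) := by
      have hconj2 : Real.HolderConjugate 2 2 := ⟨by norm_num, by norm_num, by norm_num⟩
      have := ENNReal.lintegral_mul_le_Lp_mul_Lq (volume : Measure E3) hconj2
        hum.aemeasurable hDm.aemeasurable
      simpa [hI, hJ] using this
    calc TL ≤ (volume A) ^ ((1:ℝ)/3) * (∫⁻ x, (‖u x‖₊:ℝ≥0∞)^(3:ℝ)) ^ ((1:ℝ)/(3/2)) := by
          rw [hlhs]
          calc (∫⁻ x, (A.indicator (1 : E3 → ℝ≥0∞) * fun x => (‖u x‖₊:ℝ≥0∞)^(2:ℝ)) x)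
              ≤ (∫⁻ x, (A.indicator (1 : E3 → ℝ≥0∞) x) ^ (3:ℝ)) ^ ((1:ℝ)/3)
                * (∫⁻ x, ((‖u x‖₊:ℝ≥0∞)^(2:ℝ)) ^ (3/2:ℝ)) ^ ((1:ℝ)/(3/2)) := hholder
            _ = (volume A) ^ ((1:ℝ)/3) * (∫⁻ x, (‖u x‖₊:ℝ≥0∞)^(3:ℝ)) ^ ((1:ℝ)/(3/2)) := by
                rw [hr1, hr2]
      _ ≤ V ^ ((1:ℝ)/3) * ((c:ℝ≥0∞) * (I^((1:ℝ)/2)) * (J^((1:ℝ)/2))) := by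
          refine mul_le_mul' (ENNReal.rpow_le_rpow hmuA (by norm_num)) ?_
          calc (∫⁻ x, (‖u x‖₊:ℝ≥0∞)^(3:ℝ)) ^ ((1:ℝ)/(3/2))
              ≤ (((c:ℝ≥0∞) * ∫⁻ x, (‖u x‖₊:ℝ≥0∞) * (‖fderiv ℝ u x‖₊:ℝ≥0∞)) ^ (3/2:ℝ))
                ^ ((1:ℝ)/(3/2)) := ENNReal.rpow_le_rpow hnash_u (by norm_num)
            _ = (c:ℝ≥0∞) * ∫⁻ x, (‖u x‖₊:ℝ≥0∞) * (‖fderiv ℝ u x‖₊:ℝ≥0∞) := by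
                rw [← ENNReal.rpow_mul]
                norm_num
            _ ≤ (c:ℝ≥0∞) * ((I^((1:ℝ)/2)) * (J^((1:ℝ)/2))) := mul_le_mul_right hhold2 _
            _ = (c:ℝ≥0∞) * (I^((1:ℝ)/2)) * (J^((1:ℝ)/2)) := by ring
  -- assemble
  have hfinal : I ≤ 2 * ENNReal.ofReal C₀
      + 2 * (V^((1:ℝ)/3) * ((c:ℝ≥0∞) * (I^((1:ℝ)/2)) * (J^((1:ℝ)/2)))) :=
    hIle.trans (add_le_add_right (mul_le_mul_right hTLbound _) _)
  have hIhalf_ne : I^((1:ℝ)/2) ≠ ⊤ := ENNReal.rpow_ne_top_of_nonneg (by norm_num) hIne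
  have hJhalf_ne : J^((1:ℝ)/2) ≠ ⊤ := ENNReal.rpow_ne_top_of_nonneg (by norm_num) hJne
  have hV3_ne : V^((1:ℝ)/3) ≠ ⊤ := ENNReal.rpow_ne_top_of_nonneg (by norm_num) hVne
  have hRHS_ne : (2 * ENNReal.ofReal C₀
      + 2 * (V^((1:ℝ)/3) * ((c:ℝ≥0∞) * (I^((1:ℝ)/2)) * (J^((1:ℝ)/2))))) ≠ ⊤ := by
    refine ENNReal.add_ne_top.mpr ⟨ENNReal.mul_ne_top (by norm_num) ENNReal.ofReal_ne_top, ?_⟩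
    refine ENNReal.mul_ne_top (by norm_num) ?_
    exact ENNReal.mul_ne_top hV3_ne (ENNReal.mul_ne_top (ENNReal.mul_ne_top ENNReal.coe_ne_top
      hIhalf_ne) hJhalf_ne)
  have htoReal := ENNReal.toReal_mono hRHS_ne hfinal
  rw [hX2]
  refine le_trans htoReal ?_
  have hXge : I^((1:ℝ)/2) = ENNReal.ofReal X := hXeq.symm
  have hDge : J^((1:ℝ)/2) = ENNReal.ofReal D := hDeq.symm
  rw [hXge, hDge]
  rw [ENNReal.toReal_add (ENNReal.mul_ne_top (by norm_num) ENNReal.ofReal_ne_top)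
    (by
      refine ENNReal.mul_ne_top (by norm_num) ?_
      exact ENNReal.mul_ne_top hV3_ne (ENNReal.mul_ne_top (ENNReal.mul_ne_top ENNReal.coe_ne_top
        ENNReal.ofReal_ne_top) ENNReal.ofReal_ne_top))]
  rw [ENNReal.toReal_mul, ENNReal.toReal_mul, ENNReal.toReal_mul, ENNReal.toReal_mul,
    ENNReal.toReal_mul]
  simp only [ENNReal.toReal_ofNat, ENNReal.coe_toReal,
    ENNReal.toReal_ofReal hC₀.le, ENNReal.toReal_ofReal (by positivity : (0:ℝ) ≤ X),
    ENNReal.toReal_ofReal (by positivity : (0:ℝ) ≤ D)]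
  have hXnn : 0 ≤ X := ENNReal.toReal_nonneg
  have hDnn : 0 ≤ D := ENNReal.toReal_nonneg
  have hc' : 0 ≤ (V^((1:ℝ)/3)).toReal := ENNReal.toReal_nonneg
  nlinarith [mul_nonneg hXnn hDnn, mul_nonneg (mul_nonneg hc' c.coe_nonneg) (mul_nonneg hXnn hDnn)]

-- pure algebra
lemma algebra1 {k C₀ K X D : ℝ} (hk : 3/2 < k ∧ k ≤ 2) (hC₀ : 0 < C₀) (hK : 0 < K)
    (hX : 0 ≤ X) (hD : 0 ≤ D) (h : X^2 ≤ 2*C₀ + K * X * D) :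
    X^2 ≤ (3*C₀ + 2*K^2 + K + 1) * (1 + X ^ (2 - 3/k) * D ^ (3/k)) := by
  have hk0 : (0:ℝ) < k := by linarith
  set α := 2 - 3/k with hα
  set β := 3/k with hβ
  have hβ15 : (3/2:ℝ) ≤ β := by
    rw [hβ]
    rw [div_le_div_iff₀ (by norm_num) hk0] at *
    nlinarith [hk.2]
  have hαpos : 0 < α := by
    rw [hα]
    have : 3/k < 2 := by
      rw [div_lt_iff₀ hk0]
      linarith [hk.1]
    linarith
  have hαβ : α + β = 2 := by rw [hα, hβ]; ring
  have hprod : 0 ≤ X ^ α * D ^ β := by positivity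
  set C' := 3*C₀ + 2*K^2 + K + 1 with hC'
  have hC'pos : 0 < C' := by positivity
  rcases eq_or_lt_of_le hX with rfl | hXpos
  · simp [Real.zero_rpow hαpos.ne']
    positivity
  rcases eq_or_lt_of_le hD with rfl | hDpos
  · -- D = 0 : X² ≤ 2C₀
    have hβ0 : β ≠ 0 := by linarith
    simp only [Real.zero_rpow hβ0, mul_zero, add_zero, mul_one] at h ⊢
    rw [hC']
    nlinarith [sq_nonneg K]
  by_cases hcase : X ≤ D
  · -- XD ≤ X^α D^β
    have h1 : X ^ ((1:ℝ) - α) ≤ D ^ ((1:ℝ) - α) := by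
      refine Real.rpow_le_rpow hX hcase (by linarith)
    have hXD : X * D ≤ X ^ α * D ^ β := by
      have e1 : X = X ^ α * X ^ ((1:ℝ) - α) := by
        rw [← Real.rpow_add hXpos]
        norm_num
      have e2 : D ^ ((1:ℝ) - α) * D = D ^ β := by
        nth_rewrite 2 [show D = D ^ (1:ℝ) by rw [Real.rpow_one]]
        rw [← Real.rpow_add hDpos]
        rw [show (1:ℝ) - α + 1 = β by linarith [hαβ]]
      calc X * D = X ^ α * X ^ ((1:ℝ) - α) * D := by rw [← e1]
        _ ≤ X ^ α * D ^ ((1:ℝ) - α) * D := by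
            have := mul_le_mul_of_nonneg_left h1 (le_of_lt (Real.rpow_pos_of_pos hXpos α))
            nlinarith [this, hD]
        _ = X ^ α * D ^ β := by rw [mul_assoc, e2]
    nlinarith [hXD, mul_le_mul_of_nonneg_left hXD hK.le]
  · push_neg at hcase
    have hD2 : D^2 ≤ X ^ α * D ^ β := by
      have h1 : D ^ α ≤ X ^ α := by
        exact Real.rpow_le_rpow hD hcase.le hαpos.le
      have e2 : D ^ α * D ^ β = D ^ (2:ℝ) := by
        rw [← Real.rpow_add hDpos, hαβ]
      have e3 : D ^ (2:ℝ) = D^2 := by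
        rw [show (2:ℝ) = ((2:ℕ):ℝ) by norm_num, Real.rpow_natCast]
      calc D^2 = D ^ α * D ^ β := by rw [e2, e3]
        _ ≤ X ^ α * D ^ β := by
            have hDβ : 0 ≤ D ^ β := by positivity
            nlinarith [h1, hDβ]
    -- K X D ≤ X²/4 + K² D²
    nlinarith [sq_nonneg (X/2 - K*D), hprod, hD2]

lemma algebra2 {C₀ K X D Db : ℝ} (hC₀ : 0 < C₀) (hK : 0 < K)
    (hX : 0 ≤ X) (hD : 0 ≤ D) (hDb : D ≤ Db) (h : X^2 ≤ 2*C₀ + K * X * D) :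
    X ≤ K * Db + 2*C₀ + 1 := by
  by_contra hcon
  push_neg at hcon
  have hDbnn : 0 ≤ Db := le_trans hD hDb
  have hX1 : 1 ≤ X := by nlinarith
  nlinarith [mul_le_mul_of_nonneg_left hDb (mul_nonneg hK.le hX)]

/-- in `ℝ³`, if `∫ ρ|u|² ≤ C₀`, `‖ρ − 1‖_{L^k} ≤ C₀` with `k ∈ (3/2, 2]`,
`ρ ≥ 0` bounded, and `u ∈ L² ∩ Ḣ¹`, then
`‖u‖²_{L²} ≤ C₀' (1 + ‖u‖_{L²}^{2−3/k} ‖∇u‖_{L²}^{3/k})` with `C₀'` depending only on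
`C₀` and `k`; consequently `‖u‖_{L²}` is bounded in terms of `C₀`, `k` and `‖∇u‖_{L²}`. -/
theorem l2_bound_from_energy
    (k C₀ : ℝ) (hk : 3/2 < k ∧ k ≤ 2) (hC₀ : 0 < C₀) :
    (∃ C' : ℝ, 0 < C' ∧
      ∀ (u : EuclideanSpace ℝ (Fin 3) → EuclideanSpace ℝ (Fin 3))
        (ρ : EuclideanSpace ℝ (Fin 3) → ℝ),
        MemLp u 2 → Differentiable ℝ u → MemLp (fun x => ‖fderiv ℝ u x‖) 2 →
        MemLp ρ ∞ → (∀ x, 0 ≤ ρ x) →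
        (∫ x, ρ x * ‖u x‖^2) ≤ C₀ →
        eLpNorm (fun x => ρ x - 1) (ENNReal.ofReal k) volume ≤ ENNReal.ofReal C₀ →
        ((eLpNorm u 2 volume).toReal) ^ 2
          ≤ C' * (1 + ((eLpNorm u 2 volume).toReal) ^ (2 - 3/k) *
              ((eLpNorm (fun x => ‖fderiv ℝ u x‖) 2 volume).toReal) ^ (3/k))) ∧
    (∀ D : ℝ, 0 ≤ D → ∃ B : ℝ, 0 < B ∧
      ∀ (u : EuclideanSpace ℝ (Fin 3) → EuclideanSpace ℝ (Fin 3))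
        (ρ : EuclideanSpace ℝ (Fin 3) → ℝ),
        MemLp u 2 → Differentiable ℝ u → MemLp (fun x => ‖fderiv ℝ u x‖) 2 →
        MemLp ρ ∞ → (∀ x, 0 ≤ ρ x) →
        (∫ x, ρ x * ‖u x‖^2) ≤ C₀ →
        eLpNorm (fun x => ρ x - 1) (ENNReal.ofReal k) volume ≤ ENNReal.ofReal C₀ →
        (eLpNorm (fun x => ‖fderiv ℝ u x‖) 2 volume).toReal ≤ D →
        (eLpNorm u 2 volume).toReal ≤ B) := by
  obtain ⟨K, hKpos, hkey⟩ := key_bound k C₀ hk hC₀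
  constructor
  · refine ⟨3*C₀ + 2*K^2 + K + 1, by positivity, fun u ρ h1 h2 h3 h4 h5 h6 h7 => ?_⟩
    exact algebra1 hk hC₀ hKpos ENNReal.toReal_nonneg ENNReal.toReal_nonneg
      (hkey u ρ h1 h2 h3 h4 h5 h6 h7)
  · intro D hD
    refine ⟨K * D + 2*C₀ + 1, by positivity, fun u ρ h1 h2 h3 h4 h5 h6 h7 h8 => ?_⟩
    exact algebra2 hC₀ hKpos ENNReal.toReal_nonneg ENNReal.toReal_nonneg h8
      (hkey u ρ h1 h2 h3 h4 h5 h6 h7)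

end
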